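/- Let μ ∈ (0,2), ν ∈ ℝ, τ₀ > 0, let x(t) = 𝐽̃_{ν,μ}(t) = t^{(μ−1)/2} J_{ν̃}(t) with ν̃ = sqrt(((μ−1)/2)² + ν²), and let r(t) = sqrt(x(t)² + x'(t)²). Then r(t)² = (2/π)·t^{μ−2} + O(t^{μ−3}) as t → ∞; in particular r(t) ≍ t^{−(2−μ)/2} as t → ∞ (i.e., there are positive constants C, D with C·t^{−(2−μ)/2} ≤ r(t) ≤ D·t^{−(2−μ)/2} for all large t). -/

import Mathlib

open Real Filter Set

set_option maxHeartbeats 1000000 in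
/-- For x(t) = t^((μ−1)/2) J_ν̃(t), μ ∈ (0,2), where J_ν̃ has the
Hankel asymptotic expansion (hypotheses hJ–hS below), the phase radius
r(t) = sqrt(x(t)² + x'(t)²) satisfies r(t)² = (2/π)·t^(μ−2) + O(t^(μ−3)) and
hence r(t) ≍ t^(−(2−μ)/2) as t → ∞. -/
theorem generalized_Bessel_radius_asymptotics (μ ν τ₀ : ℝ)
    (hμ : μ ∈ Set.Ioo (0 : ℝ) 2) (hτ₀ : 0 < τ₀)
    (νt : ℝ) (hνt : νt = Real.sqrt (((μ - 1) / 2) ^ 2 + ν ^ 2))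
    (J J' P Q R S : ℝ → ℝ)
    (hderiv : ∀ t > (0:ℝ), HasDerivAt J (J' t) t)
    (hJ : ∀ t > (0:ℝ), J t = Real.sqrt (2 / (π * t)) *
      (P t * Real.cos (t - (νt / 2 + 1 / 4) * π) - Q t * Real.sin (t - (νt / 2 + 1 / 4) * π)))
    (hJ' : ∀ t > (0:ℝ), J' t = Real.sqrt (2 / (π * t)) *
      (- R t * Real.sin (t - (νt / 2 + 1 / 4) * π) - S t * Real.cos (t - (νt / 2 + 1 / 4) * π)))
    (hP : ∃ C : ℝ, ∀ᶠ t : ℝ in atTop, |P t - 1| ≤ C * t ^ (-2 : ℝ))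
    (hQ : ∃ C : ℝ, ∀ᶠ t : ℝ in atTop, |Q t| ≤ C * t ^ (-1 : ℝ))
    (hR : ∃ C : ℝ, ∀ᶠ t : ℝ in atTop, |R t - 1| ≤ C * t ^ (-2 : ℝ))
    (hS : ∃ C : ℝ, ∀ᶠ t : ℝ in atTop, |S t| ≤ C * t ^ (-1 : ℝ))
    (x x' r : ℝ → ℝ)
    (hx : ∀ t > (0:ℝ), x t = t ^ ((μ - 1) / 2) * J t)
    (hx' : ∀ t > (0:ℝ), x' t = ((μ - 1) / 2) * t ^ ((μ - 3) / 2) * J t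
      + t ^ ((μ - 1) / 2) * J' t)
    (hr : ∀ t, r t = Real.sqrt (x t ^ 2 + x' t ^ 2)) :
    (∃ C : ℝ, ∀ᶠ t : ℝ in atTop, |r t ^ 2 - (2 / π) * t ^ (μ - 2)| ≤ C * t ^ (μ - 3)) ∧
    (∃ C D : ℝ, 0 < C ∧ 0 < D ∧ ∀ᶠ t : ℝ in atTop,
      C * t ^ (-(2 - μ) / 2) ≤ r t ∧ r t ≤ D * t ^ (-(2 - μ) / 2)) := by
  obtain ⟨hμ0, hμ2⟩ := hμ
  obtain ⟨CP, hP⟩ := hP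
  obtain ⟨CQ, hQ⟩ := hQ
  obtain ⟨CR, hR⟩ := hR
  obtain ⟨CS, hS⟩ := hS
  have hπ : (0:ℝ) < π := Real.pi_pos
  have hπ' : (π:ℝ) ≠ 0 := hπ.ne'
  set a : ℝ := (μ - 1) / 2 with ha
  set K₁ : ℝ := max CP 0 + max CQ 0 with hK₁
  set K₂ : ℝ := |a| * (1 + K₁) + max CR 0 + max CS 0 with hK₂
  set K : ℝ := K₁ * (2 + K₁) + K₂ * (2 + K₂) with hK
  have hK₁0 : 0 ≤ K₁ := by positivity
  have hK₂0 : 0 ≤ K₂ := by positivity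
  have hK0 : 0 ≤ K := by positivity
  have hmain : ∀ᶠ t : ℝ in atTop,
      |r t ^ 2 - (2 / π) * t ^ (μ - 2)| ≤ (2 / π * (K + 1)) * t ^ (μ - 3) := by
    filter_upwards [hP, hQ, hR, hS, eventually_ge_atTop 1] with t hPt hQt hRt hSt ht1
    have ht0 : (0:ℝ) < t := lt_of_lt_of_le one_pos ht1
    have ht0' : t ≠ 0 := ht0.ne'
    have htinv : t ^ (-1:ℝ) = 1 / t := by
      rw [Real.rpow_neg ht0.le, Real.rpow_one, one_div]
    have hmono : t ^ (-2:ℝ) ≤ t ^ (-1:ℝ) :=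
      Real.rpow_le_rpow_of_exponent_le ht1 (by norm_num)
    have hinv0 : (0:ℝ) ≤ t ^ (-1:ℝ) := Real.rpow_nonneg ht0.le _
    have hP2 : |P t - 1| ≤ max CP 0 / t := by
      calc |P t - 1| ≤ CP * t ^ (-2:ℝ) := hPt
        _ ≤ max CP 0 * t ^ (-1:ℝ) :=
            mul_le_mul (le_max_left _ _) hmono (Real.rpow_nonneg ht0.le _) (le_max_right _ _)
        _ = max CP 0 / t := by rw [htinv]; ring
    have hQ2 : |Q t| ≤ max CQ 0 / t := by
      calc |Q t| ≤ CQ * t ^ (-1:ℝ) := hQt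
        _ ≤ max CQ 0 * t ^ (-1:ℝ) := mul_le_mul_of_nonneg_right (le_max_left _ _) hinv0
        _ = max CQ 0 / t := by rw [htinv]; ring
    have hR2 : |R t - 1| ≤ max CR 0 / t := by
      calc |R t - 1| ≤ CR * t ^ (-2:ℝ) := hRt
        _ ≤ max CR 0 * t ^ (-1:ℝ) :=
            mul_le_mul (le_max_left _ _) hmono (Real.rpow_nonneg ht0.le _) (le_max_right _ _)
        _ = max CR 0 / t := by rw [htinv]; ring
    have hS2 : |S t| ≤ max CS 0 / t := by
      calc |S t| ≤ CS * t ^ (-1:ℝ) := hSt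
        _ ≤ max CS 0 * t ^ (-1:ℝ) := mul_le_mul_of_nonneg_right (le_max_left _ _) hinv0
        _ = max CS 0 / t := by rw [htinv]; ring
    set χ : ℝ := t - (νt / 2 + 1 / 4) * π with hχ
    set c : ℝ := Real.cos χ with hc
    set s : ℝ := Real.sin χ with hs
    have hcs : c ^ 2 + s ^ 2 = 1 := Real.cos_sq_add_sin_sq χ
    have hc1 : |c| ≤ 1 := Real.abs_cos_le_one χ
    have hs1 : |s| ≤ 1 := Real.abs_sin_le_one χ
    set u : ℝ := P t * c - Q t * s with hu
    set v : ℝ := a / t * u - R t * s - S t * c with hv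
    set w : ℝ := Real.sqrt (2 / (π * t)) with hw
    have hw2 : w ^ 2 = 2 / (π * t) := Real.sq_sqrt (by positivity)
    have hxt : x t = t ^ a * (w * u) := by
      rw [hx t ht0, hJ t ht0]
    have hpow3 : t ^ ((μ - 3) / 2) = t ^ a / t := by
      rw [show (μ - 3) / 2 = a - 1 by rw [ha]; ring, Real.rpow_sub ht0, Real.rpow_one]
    have hx't : x' t = t ^ a * (w * v) := by
      rw [hx' t ht0, hJ t ht0, hJ' t ht0, hpow3]
      simp only [hv, hu, hw, hc, hs, hχ]
      field_simp
      ring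
    have hr2 : r t ^ 2 = (2 / π) * t ^ (μ - 2) * (u ^ 2 + v ^ 2) := by
      rw [hr t, Real.sq_sqrt (by positivity), hxt, hx't]
      have hta : t ^ a * t ^ a = t ^ (μ - 2) * t := by
        rw [← Real.rpow_add ht0, show a + a = (μ - 2) + 1 by rw [ha]; ring,
          Real.rpow_add ht0, Real.rpow_one]
      calc (t ^ a * (w * u)) ^ 2 + (t ^ a * (w * v)) ^ 2
          = (t ^ a * t ^ a) * w ^ 2 * (u ^ 2 + v ^ 2) := by ring
        _ = (2 / π) * t ^ (μ - 2) * (u ^ 2 + v ^ 2) := by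
            rw [hta, hw2]; field_simp
    have habsP : |(P t - 1) * c| ≤ max CP 0 / t := by
      rw [abs_mul]
      calc |P t - 1| * |c| ≤ (max CP 0 / t) * 1 :=
            mul_le_mul hP2 hc1 (abs_nonneg _) (by positivity)
        _ = max CP 0 / t := mul_one _
    have habsQ : |Q t * s| ≤ max CQ 0 / t := by
      rw [abs_mul]
      calc |Q t| * |s| ≤ (max CQ 0 / t) * 1 :=
            mul_le_mul hQ2 hs1 (abs_nonneg _) (by positivity)
        _ = max CQ 0 / t := mul_one _
    have habsR : |(R t - 1) * s| ≤ max CR 0 / t := by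
      rw [abs_mul]
      calc |R t - 1| * |s| ≤ (max CR 0 / t) * 1 :=
            mul_le_mul hR2 hs1 (abs_nonneg _) (by positivity)
        _ = max CR 0 / t := mul_one _
    have habsS : |S t * c| ≤ max CS 0 / t := by
      rw [abs_mul]
      calc |S t| * |c| ≤ (max CS 0 / t) * 1 :=
            mul_le_mul hS2 hc1 (abs_nonneg _) (by positivity)
        _ = max CS 0 / t := mul_one _
    have huc : |u - c| ≤ K₁ / t := by
      have e : u - c = (P t - 1) * c - Q t * s := by rw [hu]; ring
      rw [e]
      calc |(P t - 1) * c - Q t * s| ≤ |(P t - 1) * c| + |Q t * s| := abs_sub _ _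
        _ ≤ max CP 0 / t + max CQ 0 / t := add_le_add habsP habsQ
        _ = K₁ / t := by rw [hK₁]; ring
    have hub : |u| ≤ 1 + K₁ := by
      have : |u| ≤ |c| + |u - c| := by
        calc |u| = |c + (u - c)| := by ring_nf
          _ ≤ |c| + |u - c| := abs_add_le _ _
      have hK1t : K₁ / t ≤ K₁ := div_le_self hK₁0 ht1
      linarith
    have hau : |a / t * u| ≤ |a| * (1 + K₁) / t := by
      rw [abs_mul, abs_div, abs_of_pos ht0]
      calc |a| / t * |u| ≤ |a| / t * (1 + K₁) :=
            mul_le_mul_of_nonneg_left hub (by positivity)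
        _ = |a| * (1 + K₁) / t := by ring
    have hvs : |v + s| ≤ K₂ / t := by
      have e : v + s = a / t * u - (R t - 1) * s - S t * c := by rw [hv]; ring
      rw [e]
      calc |a / t * u - (R t - 1) * s - S t * c|
          ≤ |a / t * u - (R t - 1) * s| + |S t * c| := abs_sub _ _
        _ ≤ (|a / t * u| + |(R t - 1) * s|) + |S t * c| :=
            add_le_add_left (abs_sub _ _) _
        _ ≤ (|a| * (1 + K₁) / t + max CR 0 / t) + max CS 0 / t :=
            add_le_add (add_le_add hau habsR) habsS
        _ = K₂ / t := by rw [hK₂]; ring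
    have hvb : |v| ≤ 1 + K₂ := by
      have : |v| ≤ |s| + |v + s| := by
        calc |v| = |-s + (v + s)| := by ring_nf
          _ ≤ |-s| + |v + s| := abs_add_le _ _
          _ = |s| + |v + s| := by rw [abs_neg]
      have hK2t : K₂ / t ≤ K₂ := div_le_self hK₂0 ht1
      linarith
    have hB : |u ^ 2 + v ^ 2 - 1| ≤ K / t := by
      have e : u ^ 2 + v ^ 2 - 1 = (u - c) * (u + c) + (v + s) * (v - s) := by
        linear_combination hcs
      rw [e]
      have h1 : |u + c| ≤ 2 + K₁ := by
        have := abs_add_le u c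
        linarith [hc1, hub]
      have h2 : |v - s| ≤ 2 + K₂ := by
        have := abs_sub v s
        linarith [hs1, hvb]
      calc |(u - c) * (u + c) + (v + s) * (v - s)|
          ≤ |(u - c) * (u + c)| + |(v + s) * (v - s)| := abs_add_le _ _
        _ = |u - c| * |u + c| + |v + s| * |v - s| := by rw [abs_mul, abs_mul]
        _ ≤ (K₁ / t) * (2 + K₁) + (K₂ / t) * (2 + K₂) := by
            exact add_le_add (mul_le_mul huc h1 (abs_nonneg _) (by positivity))
              (mul_le_mul hvs h2 (abs_nonneg _) (by positivity))
        _ = K / t := by rw [hK]; ring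
    have hX0 : (0:ℝ) ≤ t ^ (μ - 2) := Real.rpow_nonneg ht0.le _
    have hpm : t ^ (μ - 2) = t ^ (μ - 3) * t := by
      rw [show μ - 2 = (μ - 3) + 1 by ring, Real.rpow_add ht0, Real.rpow_one]
    have h3 : (0:ℝ) ≤ t ^ (μ - 3) := Real.rpow_nonneg ht0.le _
    have e2 : r t ^ 2 - (2 / π) * t ^ (μ - 2)
        = (2 / π) * t ^ (μ - 2) * (u ^ 2 + v ^ 2 - 1) := by
      rw [hr2]; ring
    rw [e2, abs_mul, abs_of_nonneg (by positivity : (0:ℝ) ≤ 2 / π * t ^ (μ - 2))]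
    calc 2 / π * t ^ (μ - 2) * |u ^ 2 + v ^ 2 - 1|
        ≤ 2 / π * t ^ (μ - 2) * (K / t) :=
          mul_le_mul_of_nonneg_left hB (by positivity)
      _ = 2 / π * K * t ^ (μ - 3) := by
          rw [hpm]
          linear_combination (2 / π * t ^ (μ - 3)) * (div_mul_cancel₀ K ht0')
      _ ≤ (2 / π * (K + 1)) * t ^ (μ - 3) := by
          apply mul_le_mul_of_nonneg_right _ h3
          apply mul_le_mul_of_nonneg_left (by linarith) (by positivity)
  constructor
  · exact ⟨2 / π * (K + 1), hmain⟩
  · refine ⟨Real.sqrt (1 / π), Real.sqrt (3 / π),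
      Real.sqrt_pos.mpr (by positivity), Real.sqrt_pos.mpr (by positivity), ?_⟩
    filter_upwards [hmain, eventually_ge_atTop (max 1 (2 * (K + 1)))] with t hbd ht
    have ht1 : (1:ℝ) ≤ t := le_trans (le_max_left _ _) ht
    have htK : 2 * (K + 1) ≤ t := le_trans (le_max_right _ _) ht
    have ht0 : (0:ℝ) < t := lt_of_lt_of_le one_pos ht1
    have hX0 : (0:ℝ) ≤ t ^ (μ - 2) := Real.rpow_nonneg ht0.le _
    have h3 : (0:ℝ) ≤ t ^ (μ - 3) := Real.rpow_nonneg ht0.le _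
    have hpm : t ^ (μ - 2) = t ^ (μ - 3) * t := by
      rw [show μ - 2 = (μ - 3) + 1 by ring, Real.rpow_add ht0, Real.rpow_one]
    have habs := abs_le.mp hbd
    have hb2 : 2 / π * (K + 1) * t ^ (μ - 3) ≤ 1 / π * t ^ (μ - 2) := by
      have key : 2 * (K + 1) * t ^ (μ - 3) ≤ t ^ (μ - 2) := by
        rw [hpm]
        nlinarith [mul_le_mul_of_nonneg_right htK h3]
      calc 2 / π * (K + 1) * t ^ (μ - 3) = (2 * (K + 1) * t ^ (μ - 3)) / π := by ring
        _ ≤ t ^ (μ - 2) / π := by gcongr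
        _ = 1 / π * t ^ (μ - 2) := by ring
    have hAA : 2 / π * t ^ (μ - 2) = 2 * (1 / π * t ^ (μ - 2)) := by ring
    have lower : 1 / π * t ^ (μ - 2) ≤ r t ^ 2 := by
      have h := habs.1
      linarith
    have upper : r t ^ 2 ≤ 3 / π * t ^ (μ - 2) := by
      have h := habs.2
      have hA3 : 3 / π * t ^ (μ - 2) = 3 * (1 / π * t ^ (μ - 2)) := by ring
      linarith
    have hrn : (0:ℝ) ≤ r t := hr t ▸ Real.sqrt_nonneg _
    have hpow : Real.sqrt (t ^ (μ - 2)) = t ^ (-(2 - μ) / 2) := by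
      rw [Real.sqrt_eq_rpow, ← Real.rpow_mul ht0.le,
        show (μ - 2) * (1 / 2) = -(2 - μ) / 2 by ring]
    constructor
    · calc Real.sqrt (1 / π) * t ^ (-(2 - μ) / 2)
          = Real.sqrt (1 / π * t ^ (μ - 2)) := by
            rw [Real.sqrt_mul (by positivity), hpow]
        _ ≤ Real.sqrt (r t ^ 2) := Real.sqrt_le_sqrt lower
        _ = r t := Real.sqrt_sq hrn
    · calc r t = Real.sqrt (r t ^ 2) := (Real.sqrt_sq hrn).symm
        _ ≤ Real.sqrt (3 / π * t ^ (μ - 2)) := Real.sqrt_le_sqrt upper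
        _ = Real.sqrt (3 / π) * t ^ (-(2 - μ) / 2) := by
            rw [Real.sqrt_mul (by positivity), hpow]
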